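/- Let u be a vertex of a graph G with 0 ∉ σ_u(G), and suppose there exists τ ∈ ℝ with exp(−2iλτ) = −1 for every λ ∈ σ_u(G). Then the blow-up ⊗^2 G admits perfect state transfer between (0,u) and (1,u) at time τ with phase −1; that is, e_{(0,u)}^T exp(−iτ (J_2 ⊗ A)) e_{(1,u)} = −1. -/

import Mathlib

/-- The blow-up of `n` copies of `G`. -/
def SimpleGraph.blowup {V : Type*} (n : ℕ) (G : SimpleGraph V) : SimpleGraph (ZMod n × V) :=
  G.comap Prod.snd

instance {V : Type*} {n : ℕ} (G : SimpleGraph V) [h : DecidableRel G.Adj] :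
    DecidableRel (G.blowup n).Adj := fun x y => h x.2 y.2

/-- `λ ∈ σ_u(G)` for the adjacency matrix `A`. -/
def SuppMem {V : Type*} [Fintype V] (A : Matrix V V ℝ) (lam : ℝ) (u : V) : Prop :=
  ∃ x : V → ℝ, A.mulVec x = lam • x ∧ x u ≠ 0

open Matrix Kronecker NormedSpace in
theorem adj_herm {V : Type*} [Fintype V] [DecidableEq V] (G : SimpleGraph V)
    [DecidableRel G.Adj] : (G.adjMatrix ℂ).IsHermitian := by
  ext i j
  simp [Matrix.conjTranspose_apply, Matrix.IsHermitian, apply_ite (star : ℂ → ℂ),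
    SimpleGraph.adj_comm]

open Matrix Kronecker NormedSpace in
theorem supp_of_eigen {V : Type*} [Fintype V] [DecidableEq V] (G : SimpleGraph V)
    [DecidableRel G.Adj] {v : V → ℂ} {r : ℝ} {u : V}
    (hv : (G.adjMatrix ℂ) *ᵥ v = r • v) (hu : v u ≠ 0) :
    SuppMem (G.adjMatrix ℝ) r u := by
  have hre : ∀ part : ℂ →ₗ[ℝ] ℝ,
      (G.adjMatrix ℝ) *ᵥ (fun l => part (v l)) = r • (fun l => part (v l)) := by
    intro part
    funext k
    have h := congrFun hv k
    simp only [Matrix.mulVec, dotProduct, Pi.smul_apply] at h ⊢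
    have : part (∑ l, G.adjMatrix ℂ k l * v l) = part ((r : ℝ) • v k) := by rw [h]
    rw [map_sum, LinearMap.map_smul] at this
    rw [← this]
    refine Finset.sum_congr rfl fun l _ => ?_
    simp only [SimpleGraph.adjMatrix_apply]
    split <;> simp
  have hu' : ¬((v u).re = 0 ∧ (v u).im = 0) := by
    simpa [Complex.ext_iff] using hu
  by_cases hc : (v u).re = 0
  · exact ⟨fun l => Complex.imLm (v l), hre Complex.imLm, fun h => hu' ⟨hc, h⟩⟩
  · exact ⟨fun l => Complex.reLm (v l), hre Complex.reLm, hc⟩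

open Matrix Kronecker NormedSpace in
theorem entry_exp_eq_neg_one {V : Type*} [Fintype V] [DecidableEq V] (G : SimpleGraph V)
    [DecidableRel G.Adj] (u : V) (c : ℂ)
    (hc : ∀ lam : ℝ, SuppMem (G.adjMatrix ℝ) lam u → Complex.exp (c * lam) = -1) :
    exp (c • G.adjMatrix ℂ) u u = -1 := by
  have hA := adj_herm G
  set Umat : Matrix V V ℂ := ↑hA.eigenvectorUnitary with hU
  have hUstar : star Umat * Umat = 1 :=
    Matrix.mem_unitaryGroup_iff'.mp hA.eigenvectorUnitary.2
  have hUstar' : Umat * star Umat = 1 :=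
    Matrix.mem_unitaryGroup_iff.mp hA.eigenvectorUnitary.2
  have hUunit : IsUnit Umat := ⟨⟨Umat, star Umat, hUstar', hUstar⟩, rfl⟩
  have hUinv : Umat⁻¹ = star Umat := Matrix.inv_eq_right_inv hUstar'
  have hspec : c • G.adjMatrix ℂ =
      Umat * (c • Matrix.diagonal (RCLike.ofReal ∘ hA.eigenvalues)) * Umat⁻¹ := by
    rw [hUinv]
    conv_lhs => rw [hA.spectral_theorem, Unitary.conjStarAlgAut_apply]
    rw [Matrix.mul_smul, Matrix.smul_mul]
  rw [hspec, Matrix.exp_conj _ _ hUunit, hUinv]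
  have hdiag : c • Matrix.diagonal (RCLike.ofReal ∘ hA.eigenvalues) =
      Matrix.diagonal (fun j => c * (hA.eigenvalues j : ℂ)) := by
    ext i j
    rcases eq_or_ne i j with rfl | h
    · simp [Matrix.diagonal_apply_eq, Function.comp, RCLike.ofReal]
    · simp [Matrix.diagonal_apply_ne _ h]
  rw [hdiag, Matrix.exp_diagonal]
  letI : NormedRing (Matrix V V ℂ) := Matrix.linftyOpNormedRing
  letI : NormedAlgebra ℂ (Matrix V V ℂ) := Matrix.linftyOpNormedAlgebra
  have hterm : ∀ j, Umat u j * exp (c * (hA.eigenvalues j : ℂ)) * star Umat j u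
      = -(Umat u j * star Umat j u) := by
    intro j
    rw [Matrix.star_apply]
    by_cases h : Umat u j = 0
    · simp [h]
    · have hsupp : SuppMem (G.adjMatrix ℝ) (hA.eigenvalues j) u := by
        refine supp_of_eigen G (hA.mulVec_eigenvectorBasis j) ?_
        simpa [hU, Matrix.IsHermitian.eigenvectorUnitary_apply] using h
      rw [← Complex.exp_eq_exp_ℂ, hc _ hsupp]
      ring
  rw [Matrix.mul_apply]
  have : ∀ j ∈ Finset.univ, (Umat * Matrix.diagonal (exp fun j => c * (hA.eigenvalues j : ℂ))) u j * star Umat j u = -(Umat u j * star Umat j u) := by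
    intro j _
    rw [Matrix.mul_diagonal, Pi.coe_exp]
    exact hterm j
  rw [Finset.sum_congr rfl this, Finset.sum_neg_distrib, ← Matrix.mul_apply, hUstar',
    Matrix.one_apply_eq]

open Matrix Kronecker NormedSpace in
theorem exp_reindex {m n : Type*} [Fintype m] [DecidableEq m] [Fintype n] [DecidableEq n]
    (e : m ≃ n) (M : Matrix m m ℂ) :
    exp (Matrix.reindex e e M) = Matrix.reindex e e (exp M) := by
  letI : NormedRing (Matrix m m ℂ) := Matrix.linftyOpNormedRing
  letI : NormedAlgebra ℂ (Matrix m m ℂ) := Matrix.linftyOpNormedAlgebra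
  letI : NormedRing (Matrix n n ℂ) := Matrix.linftyOpNormedRing
  letI : NormedAlgebra ℂ (Matrix n n ℂ) := Matrix.linftyOpNormedAlgebra
  letI : NormedAlgebra ℚ (Matrix m m ℂ) := Matrix.linftyOpNormedAlgebra
  letI : NormedAlgebra ℚ (Matrix n n ℂ) := Matrix.linftyOpNormedAlgebra
  exact (map_exp (Matrix.reindexAlgEquiv ℂ ℂ e)
    (continuous_id.matrix_submatrix _ _) M).symm

open Matrix Kronecker NormedSpace in
/-- If `0 ∉ σ_u(G)` and `exp(−2iλτ) = −1` for every `λ ∈ σ_u(G)`, then `⊗² G` has perfect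
state transfer between `(0,u)` and `(1,u)` at time `τ` with phase `−1`. -/
theorem blowup_pst_of_exp_eq_neg_one {V : Type*} [Fintype V] [DecidableEq V]
    (G : SimpleGraph V) [DecidableRel G.Adj] (hG : G.Connected) (u : V) (τ : ℝ)
    (h0 : ¬ SuppMem (G.adjMatrix ℝ) 0 u)
    (hτ : ∀ lam : ℝ, SuppMem (G.adjMatrix ℝ) lam u →
      Complex.exp (-2 * Complex.I * lam * τ) = -1) :
    NormedSpace.exp ((-(Complex.I * τ)) • (G.blowup 2).adjMatrix ℂ) (0, u) (1, u) = -1 := by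
  set s : ℂ := -(Complex.I * τ) with hs
  set AC : Matrix V V ℂ := G.adjMatrix ℂ with hAC
  -- main diagonal entry fact
  have hmain : exp ((2 * s) • AC) u u = -1 := by
    refine entry_exp_eq_neg_one G u (2 * s) fun lam hl => ?_
    rw [← hτ lam hl]
    congr 1
    rw [hs]; ring
  -- matrices over ZMod 2
  set P : Matrix (ZMod 2) (ZMod 2) ℂ :=
    Matrix.of (fun a b => if a = 1 ∧ b = 1 then -1 else 1) with hP
  set E : Matrix (ZMod 2) (ZMod 2) ℂ :=
    Matrix.of (fun a b => if a = 0 ∧ b = 0 then 1 else 0) with hE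
  set J : Matrix (ZMod 2) (ZMod 2) ℂ := Matrix.of (fun _ _ => 1) with hJ
  have z2 : ∀ a : ZMod 2, a = 0 ∨ a = 1 := by decide
  have sum2 : ∀ f : ZMod 2 → ℂ, ∑ j, f j = f 0 + f 1 := fun f => Fin.sum_univ_two f
  have hPP : P * P = (2 : ℂ) • 1 := by
    ext a b
    rw [Matrix.mul_apply, sum2]
    rcases z2 a with rfl | rfl <;> rcases z2 b with rfl | rfl <;>
      simp [hP, Matrix.one_apply, show (0 : ZMod 2) ≠ 1 by decide,
        show (1 : ZMod 2) ≠ 0 by decide] <;> norm_num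
  have hPE : P * E = Matrix.of (fun a b => if b = 0 then (1 : ℂ) else 0) := by
    ext a b
    rw [Matrix.mul_apply, sum2]
    rcases z2 a with rfl | rfl <;> rcases z2 b with rfl | rfl <;>
      simp [hP, hE, show (0 : ZMod 2) ≠ 1 by decide, show (1 : ZMod 2) ≠ 0 by decide]
  have hPEP : P * E * P = J := by
    rw [hPE]
    ext a b
    rw [Matrix.mul_apply, sum2]
    rcases z2 a with rfl | rfl <;> rcases z2 b with rfl | rfl <;>
      simp [hP, hJ, show (0 : ZMod 2) ≠ 1 by decide, show (1 : ZMod 2) ≠ 0 by decide] <;>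
      norm_num
  set Pb : Matrix (ZMod 2 × V) (ZMod 2 × V) ℂ := P ⊗ₖ (1 : Matrix V V ℂ) with hPb
  have hPbPb : Pb * Pb = (2 : ℂ) • 1 := by
    rw [hPb, ← Matrix.mul_kronecker_mul, hPP, one_mul, Matrix.smul_kronecker,
      Matrix.one_kronecker_one]
  have hPbQ : Pb * ((2 : ℂ)⁻¹ • Pb) = 1 := by
    rw [Matrix.mul_smul, hPbPb, smul_smul]
    norm_num
  have hPbunit : IsUnit Pb :=
    ⟨⟨Pb, (2 : ℂ)⁻¹ • Pb, hPbQ, mul_eq_one_comm.mp hPbQ⟩, rfl⟩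
  have hPbinv : Pb⁻¹ = (2 : ℂ)⁻¹ • Pb := Matrix.inv_eq_right_inv hPbQ
  have hBJ : (G.blowup 2).adjMatrix ℂ = J ⊗ₖ AC := by
    ext p q
    rw [SimpleGraph.adjMatrix_apply]
    simp [hJ, hAC, SimpleGraph.blowup, Matrix.kroneckerMap_apply, SimpleGraph.adjMatrix_apply,
      SimpleGraph.comap_adj]
  have hconj : s • (G.blowup 2).adjMatrix ℂ = Pb * (E ⊗ₖ ((2 * s) • AC)) * Pb⁻¹ := by
    rw [hPbinv, hPb, Matrix.mul_smul, ← Matrix.mul_kronecker_mul, ← Matrix.mul_kronecker_mul,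
      hPEP, one_mul, mul_one, Matrix.kronecker_smul, hBJ, smul_smul]
    congr 1
    ring
  rw [hconj, Matrix.exp_conj _ _ hPbunit, hPbinv]
  -- compute exp of the corner block matrix
  set N : Matrix V V ℂ := (2 * s) • AC with hN
  set W : ZMod 2 → Matrix V V ℂ := fun a => if a = 0 then N else 0 with hW
  have hEN : E ⊗ₖ N = Matrix.reindex (Equiv.prodComm V (ZMod 2)) (Equiv.prodComm V (ZMod 2))
      (Matrix.blockDiagonal W) := by
    ext p q
    rcases p with ⟨a, x⟩
    rcases q with ⟨b, y⟩
    simp only [Matrix.reindex_apply, Matrix.submatrix_apply, Equiv.prodComm_symm,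
      Equiv.prodComm_apply, Prod.swap_prod_mk, Matrix.blockDiagonal_apply,
      Matrix.kroneckerMap_apply, hE, hW, Matrix.of_apply]
    rcases z2 a with rfl | rfl <;> rcases z2 b with rfl | rfl <;> simp
  have hexpEN : exp (E ⊗ₖ N) =
      Matrix.reindex (Equiv.prodComm V (ZMod 2)) (Equiv.prodComm V (ZMod 2))
      (Matrix.blockDiagonal (fun a => if a = 0 then exp N else 1)) := by
    have hexpW : exp W = fun a => if a = 0 then exp N else 1 := by
      letI : NormedRing (Matrix V V ℂ) := Matrix.linftyOpNormedRing
      letI : NormedAlgebra ℂ (Matrix V V ℂ) := Matrix.linftyOpNormedAlgebra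
      letI : NormedAlgebra ℚ (Matrix V V ℂ) := Matrix.linftyOpNormedAlgebra
      funext a
      erw [Pi.coe_exp]
      rcases z2 a with rfl | rfl <;>
        simp [hW, exp_zero, show (1 : ZMod 2) ≠ 0 by decide] <;> rfl
    rw [hEN, exp_reindex, Matrix.exp_blockDiagonal, hexpW]
  rw [hexpEN]
  -- final entry computation
  simp only [Matrix.mul_apply, Matrix.smul_apply, smul_eq_mul, Fintype.sum_prod_type, hPb,
    Matrix.kroneckerMap_apply, Matrix.one_apply, Matrix.reindex_apply, Matrix.submatrix_apply,
    Equiv.prodComm_symm, Equiv.prodComm_apply, Prod.swap_prod_mk, Matrix.blockDiagonal_apply,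
    mul_ite, mul_zero, mul_one, ite_mul, zero_mul, Finset.sum_ite_eq, Finset.sum_ite_eq',
    Finset.mem_univ, if_true]
  rw [sum2]
  have inner : ∀ a : ZMod 2,
      (∑ x_1 : ZMod 2, ∑ x_2 : V, if x_1 = a then
        if u = x_2 then P 0 x_1 * (if x_1 = 0 then exp N else 1) x_2 u else 0 else 0) =
      P 0 a * (if a = 0 then exp N else 1) u u := by
    intro a
    rw [sum2]
    rcases z2 a with rfl | rfl <;>
      simp [Finset.sum_ite_eq, show (1 : ZMod 2) ≠ 0 by decide,
        show (0 : ZMod 2) ≠ 1 by decide]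
  rw [inner 0, inner 1]
  simp only [hmain, hP, Matrix.one_apply_eq, Matrix.of_apply,
    show (0 : ZMod 2) ≠ 1 by decide, if_pos, if_neg, and_true, and_false, if_true, if_false]
  norm_num
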